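/- Let k be an infinite field and A a k-k-biring that is finitely generated as a k-algebra. Then Spec A is geometrically connected: for every field extension K of k, the only idempotent elements of A ⊗[k] K are 0 and 1. (Lemma 4.3 of the paper: any k-algebra scheme of finite type over an infinite field is geometrically connected.) -/

import Mathlib

/- A `k`-biring: a commutative `k`-algebra `A` with coaddition, additive counit, antipode,
comultiplication and multiplicative counit, such that for every commutative `k`-algebra `R`
the induced operations make `Hom_{k-alg}(A, R)` a commutative unital ring (equivalently, the
diagrammatic coring/codistributivity axioms hold). -/

open scoped TensorProduct

/-- The binary operation on `k`-algebra homomorphisms `A →ₐ[k] R` induced by a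
comultiplication-type map `Δ : A →ₐ[k] A ⊗[k] A`: `(f, g) ↦ mult ∘ (f ⊗ g) ∘ Δ`. -/
noncomputable def ptOp (k A : Type) [Field k] [CommRing A] [Algebra k A]
    (Δ : A →ₐ[k] A ⊗[k] A) {R : Type} [CommRing R] [Algebra k R]
    (f g : A →ₐ[k] R) : A →ₐ[k] R :=
  (Algebra.TensorProduct.lmul' k (S := R)).comp ((Algebra.TensorProduct.map f g).comp Δ)

/-- The constant point induced by a counit-type map `ε : A →ₐ[k] k`. -/
noncomputable def ptConst (k A : Type) [Field k] [CommRing A] [Algebra k A]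
    (ε : A →ₐ[k] k) {R : Type} [CommRing R] [Algebra k R] : A →ₐ[k] R :=
  (Algebra.ofId k R).comp ε

section Aux

variable (k A L : Type) [Field k] [CommRing A] [Algebra k A] [Field L] [Algebra k L]

/-- Evaluation of `L ⊗[k] A` at a point `x : A →ₐ[k] L`. -/
noncomputable def evP (x : A →ₐ[k] L) : L ⊗[k] A →ₐ[k] L :=
  Algebra.TensorProduct.productMap (AlgHom.id k L) x

variable {k A L}

lemma evP_tmul (x : A →ₐ[k] L) (l : L) (a : A) : evP k A L x (l ⊗ₜ a) = l * x a := rfl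

/-- Endomorphism of `L ⊗[k] A` attached to a comultiplication-type map `Δ` and a point `g`. -/
noncomputable def TmapP (Δ : A →ₐ[k] A ⊗[k] A) (g : A →ₐ[k] L) :
    L ⊗[k] A →ₐ[k] L ⊗[k] A :=
  Algebra.TensorProduct.productMap Algebra.TensorProduct.includeLeft
    ((Algebra.TensorProduct.productMap Algebra.TensorProduct.includeRight
      (Algebra.TensorProduct.includeLeft.comp g)).comp Δ)

lemma evP_ptOp (Δ : A →ₐ[k] A ⊗[k] A) (f g : A →ₐ[k] L) :
    evP k A L (ptOp k A Δ f g) = (evP k A L f).comp (TmapP Δ g) := by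
  apply Algebra.TensorProduct.ext'
  intro l a
  have h2 : ∀ z : A ⊗[k] A,
      evP k A L f ((Algebra.TensorProduct.productMap Algebra.TensorProduct.includeRight
        (Algebra.TensorProduct.includeLeft.comp g)) z)
      = Algebra.TensorProduct.lmul' k (S := L) (Algebra.TensorProduct.map f g z) := by
    intro z
    induction z using TensorProduct.induction_on with
    | zero => simp
    | tmul u v =>
        simp [Algebra.TensorProduct.productMap_apply_tmul,
          Algebra.TensorProduct.includeRight_apply, Algebra.TensorProduct.includeLeft_apply,
          Algebra.TensorProduct.tmul_mul_tmul, evP_tmul,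
          Algebra.TensorProduct.lmul'_apply_tmul, Algebra.TensorProduct.map_tmul, mul_comm]
    | add u v hu hv => simp [map_add, hu, hv]
  have h1 : TmapP Δ g (l ⊗ₜ a)
      = (l ⊗ₜ (1:A)) * ((Algebra.TensorProduct.productMap Algebra.TensorProduct.includeRight
        (Algebra.TensorProduct.includeLeft.comp g)) (Δ a)) := by
    simp [TmapP, Algebra.TensorProduct.productMap_apply_tmul,
      Algebra.TensorProduct.includeLeft_apply]
  calc evP k A L (ptOp k A Δ f g) (l ⊗ₜ a)
      = l * (Algebra.TensorProduct.lmul' k (S := L)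
          (Algebra.TensorProduct.map f g (Δ a))) := by
        rw [evP_tmul]; simp [ptOp]
    _ = evP k A L f ((TmapP Δ g) (l ⊗ₜ a)) := by
        rw [h1, map_mul, h2, evP_tmul, map_one, mul_one]
  
lemma ptOp_post {S T : Type} [CommRing S] [Algebra k S] [CommRing T] [Algebra k T]
    (φ : S →ₐ[k] T) (Δ : A →ₐ[k] A ⊗[k] A) (f g : A →ₐ[k] S) :
    φ.comp (ptOp k A Δ f g) = ptOp k A Δ (φ.comp f) (φ.comp g) := by
  apply AlgHom.ext
  intro a
  simp only [ptOp, AlgHom.comp_apply]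
  induction Δ a using TensorProduct.induction_on with
  | zero => simp
  | tmul u v => simp [Algebra.TensorProduct.lmul'_apply_tmul, Algebra.TensorProduct.map_tmul]
  | add u v hu hv => simp only [map_add, hu, hv]

lemma idem_nilpotent_zero {R : Type} [CommRing R] {z : R} (hz : z * z = z)
    (hn : IsNilpotent z) : z = 0 := by
  obtain ⟨n, hn⟩ := hn
  have hp : ∀ m : ℕ, z ^ (m + 1) = z := by
    intro m
    induction m with
    | zero => simp
    | succ i ih => rw [pow_succ, ih, hz]
  cases n with
  | zero =>
      have h1 : (1 : R) = 0 := by simpa using hn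
      calc z = z * 1 := (mul_one z).symm
        _ = z * 0 := by rw [h1]
        _ = 0 := mul_zero z
  | succ m => rw [← hp m]; exact hn

lemma idem_eq_of_mem_iff {R : Type} [CommRing R] {u v : R} (hu : u * u = u) (hv : v * v = v)
    (h : ∀ p ∈ minimalPrimes R, (u ∈ p ↔ v ∈ p)) : u = v := by
  have key : ∀ (a b : R), a * a = a → b * b = b →
      (∀ p ∈ minimalPrimes R, (a ∈ p ↔ b ∈ p)) → a * (1 - b) = 0 := by
    intro a b ha hb hab
    have hidem : (a * (1 - b)) * (a * (1 - b)) = a * (1 - b) := by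
      linear_combination (1 - b) ^ 2 * ha + a * hb
    have hnil : IsNilpotent (a * (1 - b)) := by
      rw [nilpotent_iff_mem_prime]
      intro J hJ
      obtain ⟨p, hp, hple⟩ := Ideal.exists_minimalPrimes_le (I := (⊥ : Ideal R)) (J := J) bot_le
      apply hple
      have hpp : p.IsPrime := hp.1.1
      by_cases hap : a ∈ p
      · exact Ideal.mul_mem_right _ _ hap
      · have hbp : b ∉ p := fun hb' => hap ((hab p hp).mpr hb')
        have hmem : b * (1 - b) ∈ p := by
          have hz : b * (1 - b) = 0 := by linear_combination -hb
          rw [hz]; exact p.zero_mem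
        rcases hpp.mem_or_mem hmem with h' | h'
        · exact absurd h' hbp
        · exact Ideal.mul_mem_left _ _ h'
    exact idem_nilpotent_zero hidem hnil
  have h1 : u * (1 - v) = 0 := key u v hu hv h
  have h2 : v * (1 - u) = 0 := key v u hv hu (fun p hp => (h p hp).symm)
  linear_combination h1 - h2

lemma idem_finite (R : Type) [CommRing R] [IsNoetherianRing R] :
    Finite {w : R // w * w = w} := by
  have hfin : (minimalPrimes R).Finite := minimalPrimes.finite_of_isNoetherianRing R
  haveI := hfin.to_subtype
  apply Finite.of_injective
    (fun w : {w : R // w * w = w} => (fun p : (minimalPrimes R) => w.1 ∈ p.1))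
  intro u v huv
  apply Subtype.ext
  apply idem_eq_of_mem_iff u.2 v.2
  intro p hp
  exact iff_of_eq (congrFun huv ⟨p, hp⟩)

lemma exists_point_eval_zero (k A : Type) [Field k] [CommRing A] [Algebra k A]
    (L : Type) [Field L] [Algebra k L] [IsAlgClosed L]
    [Algebra.FiniteType L (L ⊗[k] A)]
    (m : Ideal (L ⊗[k] A)) (hm : m.IsMaximal) :
    ∃ x : A →ₐ[k] L, ∀ r ∈ m, evP k A L x r = 0 := by
  letI : Field ((L ⊗[k] A) ⧸ m) := Ideal.Quotient.field m
  haveI : Algebra.FiniteType L ((L ⊗[k] A) ⧸ m) :=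
    Algebra.FiniteType.of_surjective (Ideal.Quotient.mkₐ L m)
      (Ideal.Quotient.mkₐ_surjective L m)
  haveI : Module.Finite L ((L ⊗[k] A) ⧸ m) := finite_of_finite_type_of_isJacobsonRing L _
  haveI : Algebra.IsIntegral L ((L ⊗[k] A) ⧸ m) := Algebra.IsIntegral.of_finite L _
  have hsurj : Function.Surjective (algebraMap L ((L ⊗[k] A) ⧸ m)) :=
    IsAlgClosed.algebraMap_bijective_of_isIntegral.2
  have hinj : Function.Injective (algebraMap L ((L ⊗[k] A) ⧸ m)) :=
    (algebraMap L _).injective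
  have hbij : Function.Bijective (Algebra.ofId L ((L ⊗[k] A) ⧸ m)) := by
    have hco : ⇑(Algebra.ofId L ((L ⊗[k] A) ⧸ m)) = ⇑(algebraMap L ((L ⊗[k] A) ⧸ m)) := rfl
    rw [hco]; exact ⟨hinj, hsurj⟩
  let eqv := AlgEquiv.ofBijective _ hbij
  let φ : (L ⊗[k] A) →ₐ[L] L := (eqv.symm.toAlgHom).comp (Ideal.Quotient.mkₐ L m)
  refine ⟨(φ.restrictScalars k).comp Algebra.TensorProduct.includeRight, ?_⟩
  intro r hr
  have heq : evP k A L ((φ.restrictScalars k).comp Algebra.TensorProduct.includeRight)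
      = φ.restrictScalars k := by
    apply Algebra.TensorProduct.ext'
    intro l a
    have hsm : (l ⊗ₜ[k] a : L ⊗[k] A) = l • ((1:L) ⊗ₜ[k] a) := by
      rw [TensorProduct.smul_tmul']; simp
    rw [evP_tmul]
    simp only [AlgHom.comp_apply, AlgHom.coe_restrictScalars',
      Algebra.TensorProduct.includeRight_apply]
    rw [hsm, map_smul, smul_eq_mul]
  rw [heq]
  show φ r = 0
  have hr0 : Ideal.Quotient.mkₐ L m r = 0 := by
    simpa [Ideal.Quotient.mkₐ_eq_mk] using Ideal.Quotient.eq_zero_iff_mem.mpr hr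
  simp [φ, AlgHom.comp_apply, hr0]

end Aux

/-- A `k`-biring structure on the commutative `k`-algebra `A`; equivalently, the structure of
an affine ring scheme on `Spec A` over `k`. -/
structure Biring (k A : Type) [Field k] [CommRing A] [Algebra k A] where
  coadd : A →ₐ[k] A ⊗[k] A
  counitAdd : A →ₐ[k] k
  antipode : A →ₐ[k] A
  comul : A →ₐ[k] A ⊗[k] A
  counitMul : A →ₐ[k] k
  pt_add_assoc : ∀ (R : Type) [CommRing R] [Algebra k R] (f g h : A →ₐ[k] R),
    ptOp k A coadd (ptOp k A coadd f g) h = ptOp k A coadd f (ptOp k A coadd g h)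
  pt_add_comm : ∀ (R : Type) [CommRing R] [Algebra k R] (f g : A →ₐ[k] R),
    ptOp k A coadd f g = ptOp k A coadd g f
  pt_zero_add : ∀ (R : Type) [CommRing R] [Algebra k R] (f : A →ₐ[k] R),
    ptOp k A coadd (ptConst k A counitAdd) f = f
  pt_add_neg : ∀ (R : Type) [CommRing R] [Algebra k R] (f : A →ₐ[k] R),
    ptOp k A coadd f (f.comp antipode) = ptConst k A counitAdd
  pt_mul_assoc : ∀ (R : Type) [CommRing R] [Algebra k R] (f g h : A →ₐ[k] R),
    ptOp k A comul (ptOp k A comul f g) h = ptOp k A comul f (ptOp k A comul g h)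
  pt_mul_comm : ∀ (R : Type) [CommRing R] [Algebra k R] (f g : A →ₐ[k] R),
    ptOp k A comul f g = ptOp k A comul g f
  pt_one_mul : ∀ (R : Type) [CommRing R] [Algebra k R] (f : A →ₐ[k] R),
    ptOp k A comul (ptConst k A counitMul) f = f
  pt_mul_add : ∀ (R : Type) [CommRing R] [Algebra k R] (f g h : A →ₐ[k] R),
    ptOp k A comul f (ptOp k A coadd g h)
      = ptOp k A coadd (ptOp k A comul f g) (ptOp k A comul f h)

/-- A `k`-`k`-biring: a `k`-biring `A` together with a map `β` from `k` to the set of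
`k`-algebra homomorphisms `A → k` such that `β 0 = ε⁺`, `β 1 = ε×`,
`β (c + c') = (β c ⊗ β c') ∘ Δ⁺` and `β (c * c') = (β c ⊗ β c') ∘ Δ×`; equivalently, an
affine `k`-algebra scheme over `k`. -/
structure Bibiring (k A : Type) [Field k] [CommRing A] [Algebra k A]
    extends Biring k A where
  beta : k → (A →ₐ[k] k)
  beta_zero : beta 0 = counitAdd
  beta_one : beta 1 = counitMul
  beta_add : ∀ c c' : k, beta (c + c') = ptOp k A coadd (beta c) (beta c')
  beta_mul : ∀ c c' : k, beta (c * c') = ptOp k A comul (beta c) (beta c')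

theorem main_algclosed (k A : Type) [Field k] [Infinite k] [CommRing A] [Algebra k A]
    (B : Bibiring k A) (hft : Algebra.FiniteType k A)
    (L : Type) [Field L] [Algebra k L] [IsAlgClosed L] :
    ∀ e : L ⊗[k] A, e * e = e → e = 0 ∨ e = 1 := by
  haveI := hft
  haveI hftL : Algebra.FiniteType L (L ⊗[k] A) := inferInstance
  haveI : IsNoetherianRing (L ⊗[k] A) := Algebra.FiniteType.isNoetherianRing L _
  haveI : Finite {w : L ⊗[k] A // w * w = w} := idem_finite _
  intro e he
  -- the "connected-component" invariant of a point
  let c2 : (A →ₐ[k] L) → ({w : L ⊗[k] A // w * w = w} → L) := fun x w => evP k A L x w.1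
  have hidem : ∀ (Δ : A →ₐ[k] A ⊗[k] A) (g : A →ₐ[k] L) (w : {w : L ⊗[k] A // w * w = w}),
      (TmapP Δ g w.1) * (TmapP Δ g w.1) = TmapP Δ g w.1 := by
    intro Δ g w; rw [← map_mul, w.2]
  have congrL : ∀ (Δ : A →ₐ[k] A ⊗[k] A) (f f' g : A →ₐ[k] L), c2 f = c2 f' →
      c2 (ptOp k A Δ f g) = c2 (ptOp k A Δ f' g) := by
    intro Δ f f' g h
    funext w
    have h1 := DFunLike.congr_fun (evP_ptOp Δ f g) w.1
    have h2 := DFunLike.congr_fun (evP_ptOp Δ f' g) w.1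
    simp only [AlgHom.comp_apply] at h1 h2
    show evP k A L (ptOp k A Δ f g) w.1 = evP k A L (ptOp k A Δ f' g) w.1
    rw [h1, h2]
    exact congrFun h ⟨TmapP Δ g w.1, hidem Δ g w⟩
  -- point-level algebra
  let cst : k → (A →ₐ[k] L) := fun c => (Algebra.ofId k L).comp (B.beta c)
  let zeroP : A →ₐ[k] L := ptConst k A B.counitAdd
  let sm : k → (A →ₐ[k] L) → (A →ₐ[k] L) := fun c x => ptOp k A B.comul (cst c) x
  have cst_add : ∀ c c', cst (c + c') = ptOp k A B.coadd (cst c) (cst c') := by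
    intro c c'
    show (Algebra.ofId k L).comp (B.beta (c + c')) = _
    rw [B.beta_add]
    exact ptOp_post (Algebra.ofId k L) B.coadd (B.beta c) (B.beta c')
  have cst_mul : ∀ c c', cst (c * c') = ptOp k A B.comul (cst c) (cst c') := by
    intro c c'
    show (Algebra.ofId k L).comp (B.beta (c * c')) = _
    rw [B.beta_mul]
    exact ptOp_post (Algebra.ofId k L) B.comul (B.beta c) (B.beta c')
  have cst_zero : cst 0 = zeroP := by
    show (Algebra.ofId k L).comp (B.beta 0) = _
    rw [B.beta_zero]; rfl
  have zero_mulP : ∀ x, ptOp k A B.comul zeroP x = zeroP := by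
    intro x
    have h00 : ptOp k A B.coadd zeroP zeroP = zeroP := B.pt_zero_add L zeroP
    have hflip : ptOp k A B.comul zeroP x = ptOp k A B.comul x zeroP := B.pt_mul_comm L zeroP x
    have hz : ptOp k A B.coadd (ptOp k A B.comul zeroP x) (ptOp k A B.comul zeroP x)
        = ptOp k A B.comul zeroP x := by
      rw [hflip, ← B.pt_mul_add L x zeroP zeroP, h00]
    have hneg := B.pt_add_neg L (ptOp k A B.comul zeroP x)
    have hfin : zeroP = ptOp k A B.comul zeroP x := by
      calc zeroP = ptOp k A B.coadd (ptOp k A B.comul zeroP x)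
            ((ptOp k A B.comul zeroP x).comp B.antipode) := hneg.symm
        _ = ptOp k A B.coadd
            (ptOp k A B.coadd (ptOp k A B.comul zeroP x) (ptOp k A B.comul zeroP x))
            ((ptOp k A B.comul zeroP x).comp B.antipode) := by rw [hz]
        _ = ptOp k A B.coadd (ptOp k A B.comul zeroP x)
            (ptOp k A B.coadd (ptOp k A B.comul zeroP x)
              ((ptOp k A B.comul zeroP x).comp B.antipode)) := B.pt_add_assoc L _ _ _
        _ = ptOp k A B.coadd (ptOp k A B.comul zeroP x) zeroP := by rw [hneg]
        _ = ptOp k A B.coadd zeroP (ptOp k A B.comul zeroP x) := B.pt_add_comm L _ _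
        _ = ptOp k A B.comul zeroP x := B.pt_zero_add L _
    exact hfin.symm
  have neg_unique : ∀ (z w : A →ₐ[k] L), ptOp k A B.coadd z w = zeroP →
      w = z.comp B.antipode := by
    intro z w h
    have hneg := B.pt_add_neg L z
    calc w = ptOp k A B.coadd zeroP w := (B.pt_zero_add L w).symm
      _ = ptOp k A B.coadd (ptOp k A B.coadd z (z.comp B.antipode)) w := by rw [hneg]
      _ = ptOp k A B.coadd (ptOp k A B.coadd (z.comp B.antipode) z) w := by
          rw [B.pt_add_comm L z (z.comp B.antipode)]
      _ = ptOp k A B.coadd (z.comp B.antipode) (ptOp k A B.coadd z w) :=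
          B.pt_add_assoc L _ _ _
      _ = ptOp k A B.coadd (z.comp B.antipode) zeroP := by rw [h]
      _ = ptOp k A B.coadd zeroP (z.comp B.antipode) := B.pt_add_comm L _ _
      _ = z.comp B.antipode := B.pt_zero_add L _
  have sm_addc : ∀ c c' x, sm (c + c') x = ptOp k A B.coadd (sm c x) (sm c' x) := by
    intro c c' x
    show ptOp k A B.comul (cst (c + c')) x = _
    rw [cst_add, B.pt_mul_comm L _ x, B.pt_mul_add L x _ _,
      B.pt_mul_comm L x (cst c), B.pt_mul_comm L x (cst c')]
  have sm_neg : ∀ c x, sm (-c) x = (sm c x).comp B.antipode := by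
    intro c x
    apply neg_unique
    rw [← sm_addc]
    rw [add_neg_cancel]
    show ptOp k A B.comul (cst 0) x = zeroP
    rw [cst_zero]; exact zero_mulP x
  have sm_sub : ∀ c c' x, sm (c - c') x
      = ptOp k A B.coadd (sm c x) ((sm c' x).comp B.antipode) := by
    intro c c' x
    rw [sub_eq_add_neg, sm_addc, sm_neg]
  have sm_sm : ∀ c c' x, sm c (sm c' x) = sm (c * c') x := by
    intro c c' x
    show ptOp k A B.comul (cst c) (ptOp k A B.comul (cst c') x)
      = ptOp k A B.comul (cst (c * c')) x
    rw [cst_mul, B.pt_mul_assoc]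
  have sm_one : ∀ x, sm 1 x = x := by
    intro x
    show ptOp k A B.comul (cst 1) x = x
    have h1 : cst 1 = ptConst k A B.counitMul := by
      show (Algebra.ofId k L).comp (B.beta 1) = _
      rw [B.beta_one]; rfl
    rw [h1]; exact B.pt_one_mul L x
  have congr_sm : ∀ c (x x' : A →ₐ[k] L), c2 x = c2 x' → c2 (sm c x) = c2 (sm c x') := by
    intro c x x' h
    have e1 : sm c x = ptOp k A B.comul x (cst c) := B.pt_mul_comm L (cst c) x
    have e2 : sm c x' = ptOp k A B.comul x' (cst c) := B.pt_mul_comm L (cst c) x'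
    rw [e1, e2]
    exact congrL B.comul x x' (cst c) h
  -- values of c2 are 0 or 1
  have h01 : ∀ x w, c2 x w = 0 ∨ c2 x w = 1 := by
    intro x w
    have hw : (evP k A L x w.1) * (evP k A L x w.1) = evP k A L x w.1 := by
      rw [← map_mul, w.2]
    have hz : (evP k A L x w.1) * ((evP k A L x w.1) - 1) = 0 := by linear_combination hw
    rcases mul_eq_zero.mp hz with h' | h'
    · exact Or.inl h'
    · exact Or.inr (by linear_combination h')
  haveI hrangefin : Finite ↥(Set.range c2) := by
    have hsub : Set.range c2 ⊆
        Set.pi Set.univ (fun _ : {w : L ⊗[k] A // w * w = w} => ({0, 1} : Set L)) := by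
      rintro f ⟨x, rfl⟩
      intro w _
      simp only [Set.mem_insert_iff, Set.mem_singleton_iff]
      exact h01 x w
    have hfinpi : (Set.pi Set.univ
        (fun _ : {w : L ⊗[k] A // w * w = w} => ({0, 1} : Set L))).Finite :=
      Set.Finite.pi (fun _ => (Set.finite_singleton 1).insert 0)
    exact (hfinpi.subset hsub).to_subtype
  let sec : ↥(Set.range c2) → (A →ₐ[k] L) := fun v => (Set.mem_range.mp v.2).choose
  have hsec : ∀ v, c2 (sec v) = v.1 := fun v => (Set.mem_range.mp v.2).choose_spec
  let Φ : k → (↥(Set.range c2) → ↥(Set.range c2)) :=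
    fun c v => ⟨c2 (sm c (sec v)), Set.mem_range_self _⟩
  obtain ⟨c, c', hne, hcc⟩ := Finite.exists_ne_map_eq_of_infinite Φ
  have key1 : ∀ x, c2 (sm c x) = c2 (sm c' x) := by
    intro x
    have hv : c2 (sec ⟨c2 x, Set.mem_range_self x⟩) = c2 x := hsec _
    have h1 : c2 (sm c x) = c2 (sm c (sec ⟨c2 x, Set.mem_range_self x⟩)) :=
      congr_sm c x _ hv.symm
    have h2 : c2 (sm c (sec ⟨c2 x, Set.mem_range_self x⟩))
        = c2 (sm c' (sec ⟨c2 x, Set.mem_range_self x⟩)) :=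
      congrArg Subtype.val (congrFun hcc ⟨c2 x, Set.mem_range_self x⟩)
    rw [h1, h2]
    exact (congr_sm c' x _ hv.symm).symm
  have hdne : c - c' ≠ 0 := sub_ne_zero.mpr hne
  have key2 : ∀ x, c2 (sm (c - c') x) = c2 zeroP := by
    intro x
    rw [sm_sub c c' x]
    have h2 := congrL B.coadd (sm c x) (sm c' x) ((sm c' x).comp B.antipode) (key1 x)
    rw [h2, B.pt_add_neg L (sm c' x)]
  have hconst : ∀ x y : (A →ₐ[k] L), c2 x = c2 y := by
    intro x y
    have hx : c2 (sm (c - c')⁻¹ (sm (c - c') x)) = c2 x := by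
      rw [sm_sm, inv_mul_cancel₀ hdne, sm_one]
    have hy : c2 (sm (c - c')⁻¹ (sm (c - c') y)) = c2 y := by
      rw [sm_sm, inv_mul_cancel₀ hdne, sm_one]
    rw [← hx, ← hy]
    exact congr_sm _ _ _ ((key2 x).trans (key2 y).symm)
  -- vanishing at all points forces an idempotent to be zero
  have vanish : ∀ (u : L ⊗[k] A), u * u = u →
      (∀ x : A →ₐ[k] L, evP k A L x u = 0) → u = 0 := by
    intro u hu hall
    by_cases htop : Ideal.span {(1 : L ⊗[k] A) - u} = ⊤
    · have h1 : (1 : L ⊗[k] A) ∈ Ideal.span {(1 : L ⊗[k] A) - u} := by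
        rw [htop]; exact Submodule.mem_top
      obtain ⟨r, hr⟩ := Ideal.mem_span_singleton'.mp h1
      linear_combination (-u) * hr + (-r) * hu
    · obtain ⟨m, hm, hle⟩ := Ideal.exists_le_maximal _ htop
      obtain ⟨x, hx⟩ := exists_point_eval_zero k A L m hm
      have h1 : evP k A L x ((1 : L ⊗[k] A) - u) = 0 :=
        hx _ (hle (Ideal.subset_span rfl))
      rw [map_sub, map_one, hall x, sub_zero] at h1
      exact absurd h1 one_ne_zero
  -- finish
  have hwe : evP k A L zeroP e = c2 zeroP ⟨e, he⟩ := rfl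
  rcases h01 zeroP ⟨e, he⟩ with h0 | h1
  · left
    apply vanish e he
    intro x
    have hcw : c2 x ⟨e, he⟩ = c2 zeroP ⟨e, he⟩ := congrFun (hconst x zeroP) ⟨e, he⟩
    show evP k A L x e = 0
    rw [show evP k A L x e = c2 x ⟨e, he⟩ from rfl, hcw, h0]
  · right
    have he' : ((1 : L ⊗[k] A) - e) * ((1 : L ⊗[k] A) - e) = (1 : L ⊗[k] A) - e := by
      linear_combination he
    have hz : (1 : L ⊗[k] A) - e = 0 := by
      apply vanish _ he'
      intro x
      have hcw : c2 x ⟨e, he⟩ = c2 zeroP ⟨e, he⟩ := congrFun (hconst x zeroP) ⟨e, he⟩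
      have hxe : evP k A L x e = 1 := by
        rw [show evP k A L x e = c2 x ⟨e, he⟩ from rfl, hcw, h1]
      rw [map_sub, map_one, hxe, sub_self]
    linear_combination -hz


/-- **Lemma 4.3**: any `k`-algebra scheme of finite type over an infinite field `k` is
geometrically connected: for every field extension `K` of `k`, the only idempotents of
`A ⊗[k] K` are `0` and `1`. -/
theorem algebra_scheme_geometrically_connected
    (k A : Type) [Field k] [Infinite k] [CommRing A] [Algebra k A]
    (B : Bibiring k A) (hft : Algebra.FiniteType k A) :
    ∀ (K : Type) [Field K] [Algebra k K],
      ∀ e : A ⊗[k] K, e * e = e → e = 0 ∨ e = 1 := by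
  intro K _ _ e he
  classical
  let L := AlgebraicClosure K
  let j1 : A ⊗[k] K →ₐ[k] A ⊗[k] L :=
    Algebra.TensorProduct.map (AlgHom.id k A) (IsScalarTower.toAlgHom k K L)
  have hinj1 : Function.Injective j1 := by
    have hf : Function.Injective ((IsScalarTower.toAlgHom k K L).toLinearMap) := by
      intro a b hab
      exact (algebraMap K L).injective hab
    have hlin : j1.toLinearMap
        = LinearMap.lTensor A ((IsScalarTower.toAlgHom k K L).toLinearMap) := by
      apply TensorProduct.ext'
      intro a x
      simp [j1]
    have h2 : Function.Injective j1.toLinearMap := by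
      rw [hlin]
      exact Module.Flat.lTensor_preserves_injective_linearMap _ hf
    exact h2
  let j2 : (A ⊗[k] L) ≃ₐ[k] (L ⊗[k] A) := Algebra.TensorProduct.comm k A L
  have hmain := main_algclosed k A B hft L (j2 (j1 e))
    (by rw [← map_mul, ← map_mul, he])
  rcases hmain with h | h
  · left
    have hj : j1 e = 0 := by
      apply j2.injective
      rw [h, map_zero]
    have : j1 e = j1 0 := by rw [hj, map_zero]
    exact hinj1 this
  · right
    have hj : j1 e = 1 := by
      apply j2.injective
      rw [h, map_one]
    have : j1 e = j1 1 := by rw [hj, map_one]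
    exact hinj1 this
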